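/- Let Γ₁, Γ₂ be groupoids, F : Γ₁ → Γ₂ a full functor that is bijective on objects, and H the family of kernels H(x) = ker(F on Γ₁(x,x)). If F is surjective on all hom-sets onto the corresponding hom-sets of Γ₂ (i.e., F is full and surjective on objects in the strict sense), then the induced functor F̄ : Γ₁/H → Γ₂ is an isomorphism of categories. -/
import Mathlib

open CategoryTheory

def IsNormalMultilocular {Γ : Type*} [Groupoid Γ] (H : ∀ x : Γ, Set (x ⟶ x)) : Prop :=
  (∀ x : Γ, 𝟙 x ∈ H x) ∧
  (∀ (x : Γ) (f g : x ⟶ x), f ∈ H x → g ∈ H x → f ≫ g ∈ H x) ∧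
  (∀ (x : Γ) (f : x ⟶ x), f ∈ H x → Groupoid.inv f ∈ H x) ∧
  (∀ (x y : Γ) (g : x ⟶ y) (h : x ⟶ x), h ∈ H x → Groupoid.inv g ≫ h ≫ g ∈ H y)

def multHomRel {Γ : Type*} [Groupoid Γ] (H : ∀ x : Γ, Set (x ⟶ x)) : HomRel Γ :=
  fun {x _} f g => ∃ h ∈ H x, f = h ≫ g

def kerFam {Γ₁ Γ₂ : Type*} [Groupoid Γ₁] [Groupoid Γ₂] (F : Γ₁ ⥤ Γ₂) :
    ∀ x : Γ₁, Set (x ⟶ x) :=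
  fun x => {f : x ⟶ x | F.map f = 𝟙 (F.obj x)}

lemma quot_map_eq_of_map_eq {Γ₁ Γ₂ : Type*} [Groupoid Γ₁] [Groupoid Γ₂] (F : Γ₁ ⥤ Γ₂)
    {x y : Γ₁} {f g : x ⟶ y} (h : F.map f = F.map g) :
    (Quotient.functor (multHomRel (kerFam F))).map f =
      (Quotient.functor (multHomRel (kerFam F))).map g := by
  apply CategoryTheory.Quotient.sound
  refine ⟨f ≫ Groupoid.inv g, ?_, by simp [Groupoid.inv_eq_inv]⟩
  simp [kerFam, h, Groupoid.inv_eq_inv]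

theorem induced_functor_isomorphism {Γ₁ Γ₂ : Type*} [Groupoid Γ₁] [Groupoid Γ₂]
    (F : Γ₁ ⥤ Γ₂) (hF : F.Full) (hobj : Function.Bijective F.obj)
    (Fbar : CategoryTheory.Quotient (multHomRel (kerFam F)) ⥤ Γ₂)
    (hFbar : CategoryTheory.Quotient.functor (multHomRel (kerFam F)) ⋙ Fbar = F) :
    ∃ Ginv : Γ₂ ⥤ CategoryTheory.Quotient (multHomRel (kerFam F)),
      Fbar ⋙ Ginv = 𝟭 _ ∧ Ginv ⋙ Fbar = 𝟭 _ := by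
  haveI := hF
  let Q := Quotient.functor (multHomRel (kerFam F))
  let e : Γ₁ ≃ Γ₂ := Equiv.ofBijective F.obj hobj
  have he : ∀ y : Γ₂, F.obj (e.symm y) = y := fun y => e.apply_symm_apply y
  have hmap : ∀ {x y : Γ₁} (f : x ⟶ y),
      Fbar.map (Q.map f) = eqToHom (Functor.congr_obj hFbar x) ≫ F.map f ≫
        eqToHom (Functor.congr_obj hFbar y).symm := fun {x y} f => Functor.congr_hom hFbar f
  let Ginv : Γ₂ ⥤ CategoryTheory.Quotient (multHomRel (kerFam F)) :=
  { obj := fun y => ⟨e.symm y⟩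
    map := fun {y y'} g => Q.map (F.preimage (eqToHom (he y) ≫ g ≫ eqToHom (he y').symm))
    map_id := fun y => by
      have h : Q.map (𝟙 (e.symm y)) =
          𝟙 (⟨e.symm y⟩ : CategoryTheory.Quotient (multHomRel (kerFam F))) := Q.map_id _
      rw [← h]
      apply quot_map_eq_of_map_eq
      simp
    map_comp := fun {a b c} g g' => by
      rw [← Q.map_comp]
      apply quot_map_eq_of_map_eq
      simp }
  refine ⟨Ginv, ?_, ?_⟩
  · have ho : ∀ X : CategoryTheory.Quotient (multHomRel (kerFam F)),
        (Fbar ⋙ Ginv).obj X = (𝟭 _).obj X := by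
      rintro ⟨x⟩
      show (⟨e.symm (Fbar.obj ⟨x⟩)⟩ : CategoryTheory.Quotient (multHomRel (kerFam F))) = ⟨x⟩
      congr 1
      apply hobj.1
      exact (he (Fbar.obj ⟨x⟩)).trans (Functor.congr_obj hFbar x)
    refine CategoryTheory.Functor.ext ho ?_
    rintro ⟨x⟩ ⟨y⟩ f
    induction f using Quot.inductionOn with
    | h f =>
      show Ginv.map (Fbar.map (Q.map f)) = _
      rw [hmap]
      show Q.map (F.preimage _) = _
      have h1 : e.symm (Fbar.obj ⟨x⟩) = x := by
        apply hobj.1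
        exact (he (Fbar.obj ⟨x⟩)).trans (Functor.congr_obj hFbar x)
      have h2 : e.symm (Fbar.obj ⟨y⟩) = y := by
        apply hobj.1
        exact (he (Fbar.obj ⟨y⟩)).trans (Functor.congr_obj hFbar y)
      have hx : (⟨e.symm (Fbar.obj ⟨x⟩)⟩ :
          CategoryTheory.Quotient (multHomRel (kerFam F))) = ⟨x⟩ := by rw [h1]
      have hy : (⟨e.symm (Fbar.obj ⟨y⟩)⟩ :
          CategoryTheory.Quotient (multHomRel (kerFam F))) = ⟨y⟩ := by rw [h2]
      calc Q.map (F.preimage (eqToHom (he (Fbar.obj ⟨x⟩)) ≫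
            (eqToHom (Functor.congr_obj hFbar x) ≫ F.map f ≫
              eqToHom (Functor.congr_obj hFbar y).symm) ≫ eqToHom (he (Fbar.obj ⟨y⟩)).symm))
          = Q.map (eqToHom h1 ≫ f ≫ eqToHom h2.symm) := by
            apply quot_map_eq_of_map_eq
            simp [eqToHom_map]
        _ = eqToHom hx ≫ Q.map f ≫ eqToHom hy.symm := by
            rw [Q.map_comp, Q.map_comp, eqToHom_map, eqToHom_map]
        _ = _ := rfl
  · have ho : ∀ y : Γ₂, (Ginv ⋙ Fbar).obj y = (𝟭 _).obj y := by
      intro y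
      show Fbar.obj ⟨e.symm y⟩ = y
      exact (Functor.congr_obj hFbar (e.symm y)).trans (he y)
    refine CategoryTheory.Functor.ext ho ?_
    intro y y' g
    show Fbar.map (Q.map _) = _
    rw [hmap]
    simp [eqToHom_map]
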